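/- Let 𝒟 = [n_1] × … × [n_d] be a d-dimensional grid graph (all n_i ≥ 2) and let V ≥ 1. Two vertices p, p' ∈ 𝒟 satisfy S_V(p) = S_V(p') if and only if for every i ∈ {1, …, d} one has l_i(p) = l_i(p') and r_i(p) = r_i(p'). -/

import Mathlib

open Finset

/-- Manhattan (ℓ¹) norm of an integer vector. -/
def manhattan {d : ℕ} (p : Fin d → ℤ) : ℤ := ∑ i, |p i|

/-- The grid graph vertex set `[n 0] × ⋯ × [n (d-1)]`. -/
def grid {d : ℕ} (n : Fin d → ℕ) : Set (Fin d → ℤ) :=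
  {p | ∀ i, 1 ≤ p i ∧ p i ≤ (n i : ℤ)}

/-- Sensing data `S_V(p)`: relative positions of points of `D` within
Manhattan distance `V` of `p`. -/
def sense {d : ℕ} (D : Set (Fin d → ℤ)) (V : ℕ) (p : Fin d → ℤ) : Set (Fin d → ℤ) :=
  {q | p + q ∈ D ∧ manhattan q ≤ (V : ℤ)}

/-- A deterministic agent algorithm with `b` bits of memory: maps sensing data and a
memory state to a step and a new memory state. -/
structure Agent (d b : ℕ) where
  act : Set (Fin d → ℤ) → (Fin b → Bool) → (Fin d → ℤ) × (Fin b → Bool)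

namespace Agent

/-- Validity: at every vertex of `D`, in every memory state, the chosen step is a
unit step leading to a vertex of `D`. -/
def Valid {d b : ℕ} (A : Agent d b) (D : Set (Fin d → ℤ)) (V : ℕ) : Prop :=
  ∀ p ∈ D, ∀ m, manhattan (A.act (sense D V p) m).1 = 1 ∧
    (A.act (sense D V p) m).1 ∈ sense D V p

/-- The trajectory (position, memory) of the agent after `t` steps, starting from
position `v` and memory state `m`. -/
def traj {d b : ℕ} (A : Agent d b) (D : Set (Fin d → ℤ)) (V : ℕ)
    (v : Fin d → ℤ) (m : Fin b → Bool) : ℕ → (Fin d → ℤ) × (Fin b → Bool)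
  | 0 => (v, m)
  | t + 1 =>
      let s := Agent.traj A D V v m t
      (s.1 + (A.act (sense D V s.1) s.2).1, (A.act (sense D V s.1) s.2).2)

/-- The agent patrols `D`: it is valid, and from any initial position in `D` and any
initial memory state, its trajectory visits every vertex of `D` within finitely many
steps. -/
def Patrols {d b : ℕ} (A : Agent d b) (D : Set (Fin d → ℤ)) (V : ℕ) : Prop :=
  A.Valid D V ∧ ∀ v₁ ∈ D, ∀ m, ∀ v ∈ D, ∃ t, (A.traj D V v₁ m t).1 = v

end Agent

/-- The graph on a set of integer vectors with edges between points at Manhattan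
distance 1. -/
def latticeGraph {d : ℕ} (S : Set (Fin d → ℤ)) : SimpleGraph S where
  Adj p q := manhattan (p.1 - q.1) = 1
  symm := by
    refine ⟨?_⟩
    intro p q h
    simp only [manhattan, Pi.sub_apply] at h ⊢
    simpa [abs_sub_comm] using h
  loopless := by
    refine ⟨?_⟩
    intro p h
    simp [manhattan] at h

/-- The `d`-dimensional grid graph `[n 0] × ⋯ × [n (d-1)]`. -/
def gridGraph {d : ℕ} (n : Fin d → ℕ) : SimpleGraph (grid n) :=
  latticeGraph (grid n)

lemma mem_sense_iff {d : ℕ} (n : Fin d → ℕ) (V : ℕ) (p q : Fin d → ℤ)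
    (hp : p ∈ grid n) :
    q ∈ sense (grid n) V p ↔ manhattan q ≤ (V : ℤ) ∧
      ∀ i, -(min (p i - 1) (V : ℤ)) ≤ q i ∧ q i ≤ min ((n i : ℤ) - p i) (V : ℤ) := by
  constructor
  · rintro ⟨hg, hm⟩
    refine ⟨hm, fun i => ?_⟩
    have habs : |q i| ≤ (V : ℤ) :=
      le_trans (Finset.single_le_sum (fun j _ => abs_nonneg (q j)) (Finset.mem_univ i)) hm
    have h1 := (hg i).1
    have h2 := (hg i).2
    simp only [Pi.add_apply] at h1 h2
    constructor
    · rw [neg_le, le_min_iff]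
      exact ⟨by linarith, by linarith [neg_le_abs (q i)]⟩
    · rw [le_min_iff]
      exact ⟨by linarith, by linarith [le_abs_self (q i)]⟩
  · rintro ⟨hm, hb⟩
    refine ⟨fun i => ?_, hm⟩
    have h1 := (hb i).1
    have h2 := (hb i).2
    have hl : min (p i - 1) (V : ℤ) ≤ p i - 1 := min_le_left _ _
    have hr : min ((n i : ℤ) - p i) (V : ℤ) ≤ (n i : ℤ) - p i := min_le_left _ _
    simp only [Pi.add_apply]
    constructor <;> linarith

lemma sense_eq_key {d : ℕ} (n : Fin d → ℕ) (V : ℕ) (p p' : Fin d → ℤ)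
    (hp : p ∈ grid n) (hp' : p' ∈ grid n)
    (h : sense (grid n) V p = sense (grid n) V p') (i : Fin d) :
    min (p i - 1) (V : ℤ) ≤ min (p' i - 1) (V : ℤ) ∧
      min ((n i : ℤ) - p i) (V : ℤ) ≤ min ((n i : ℤ) - p' i) (V : ℤ) := by
  have hV0 : (0 : ℤ) ≤ (V : ℤ) := Int.natCast_nonneg V
  have hlow : ∀ j, (0 : ℤ) ≤ min (p j - 1) (V : ℤ) := fun j =>
    le_min (by linarith [(hp j).1]) hV0
  have hhigh : ∀ j, (0 : ℤ) ≤ min ((n j : ℤ) - p j) (V : ℤ) := fun j =>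
    le_min (by linarith [(hp j).2]) hV0
  constructor
  · set c := min (p i - 1) (V : ℤ) with hc
    set q : Fin d → ℤ := fun j => if j = i then -c else 0 with hq
    have hman : manhattan q = c := by
      simp only [manhattan, hq]
      rw [Finset.sum_eq_single i]
      · simp [abs_of_nonneg (hlow i)]; exact hlow i
      · intro j _ hj; simp [hj]
      · simp
    have hmem : q ∈ sense (grid n) V p := by
      rw [mem_sense_iff n V p q hp]
      refine ⟨by rw [hman]; exact min_le_right _ _, fun j => ?_⟩
      by_cases hj : j = i
      · subst hj; simp only [hq, if_pos rfl]
        exact ⟨le_refl _, by linarith [hlow j, hhigh j]⟩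
      · simp only [hq, if_neg hj]
        exact ⟨by linarith [hlow j], hhigh j⟩
    rw [h, mem_sense_iff n V p' q hp'] at hmem
    have := (hmem.2 i).1
    simp only [hq, if_pos rfl] at this
    linarith
  · set c := min ((n i : ℤ) - p i) (V : ℤ) with hc
    set q : Fin d → ℤ := fun j => if j = i then c else 0 with hq
    have hman : manhattan q = c := by
      simp only [manhattan, hq]
      rw [Finset.sum_eq_single i]
      · simp [abs_of_nonneg (hhigh i)]; exact hhigh i
      · intro j _ hj; simp [hj]
      · simp
    have hmem : q ∈ sense (grid n) V p := by
      rw [mem_sense_iff n V p q hp]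
      refine ⟨by rw [hman]; exact min_le_right _ _, fun j => ?_⟩
      by_cases hj : j = i
      · subst hj; simp only [hq, if_pos rfl]
        exact ⟨by linarith [hlow j, hhigh j], le_refl _⟩
      · simp only [hq, if_neg hj]
        exact ⟨by linarith [hlow j], hhigh j⟩
    rw [h, mem_sense_iff n V p' q hp'] at hmem
    have := (hmem.2 i).2
    simp only [hq, if_pos rfl] at this
    linarith

/-- Two vertices `p, p'` of `𝒟 = [n 0] × ⋯ × [n (d-1)]` have the same
sensing data iff for every dimension `i` the boundary distances agree:
`min (pᵢ - 1) V = min (p'ᵢ - 1) V` and `min (nᵢ - pᵢ) V = min (nᵢ - p'ᵢ) V`. -/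
theorem sense_eq_iff_boundary_distances_eq {d : ℕ} (hd : 1 ≤ d) (n : Fin d → ℕ)
    (hn : ∀ i, 2 ≤ n i) (V : ℕ) (hV : 1 ≤ V)
    (p p' : Fin d → ℤ) (hp : p ∈ grid n) (hp' : p' ∈ grid n) :
    sense (grid n) V p = sense (grid n) V p' ↔
      ∀ i, min (p i - 1) (V : ℤ) = min (p' i - 1) (V : ℤ) ∧
        min ((n i : ℤ) - p i) (V : ℤ) = min ((n i : ℤ) - p' i) (V : ℤ) := by
  constructor
  · intro h i
    exact ⟨le_antisymm (sense_eq_key n V p p' hp hp' h i).1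
        (sense_eq_key n V p' p hp' hp h.symm i).1,
      le_antisymm (sense_eq_key n V p p' hp hp' h i).2
        (sense_eq_key n V p' p hp' hp h.symm i).2⟩
  · intro h
    ext q
    show q ∈ sense (grid n) V p ↔ q ∈ sense (grid n) V p'
    rw [mem_sense_iff n V p q hp, mem_sense_iff n V p' q hp']
    constructor <;> rintro ⟨hm, hb⟩ <;> refine ⟨hm, fun i => ?_⟩
    · rw [← (h i).1, ← (h i).2]; exact hb i
    · rw [(h i).1, (h i).2]; exact hb i
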